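/- Let n, θ, λ, ζ, P_c > 0, let ε ∈ (0,1), and let c > 0. For ρ > 0 define the finite-blocklength rate r(ρ,z) = log(1+ρz)/log 2 − c·√(1 − (1+ρz)^{-2}) for z > 0, the mean rate E(ρ) = ∫_0^∞ r(ρ,z)·e^{−z} dz, and the effective energy efficiency with empty-buffer probability η(ρ) = [ −(1/(nθ))·log( ∫_0^∞ (ε + (1−ε)·exp(−nθ·r(ρ,z)))·e^{−z} dz ) ] / ( λζρ/E(ρ) + P_c ). Then η(ρ) tends to 0 as ρ tends to infinity. -/

import Mathlib

open MeasureTheory Filter Set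

lemma aux_log2_pos : (0:ℝ) < Real.log 2 := Real.log_pos one_lt_two

lemma aux_exp_int : IntegrableOn (fun z : ℝ => Real.exp (-z)) (Ioi 0) := by
  simpa using exp_neg_integrableOn_Ioi 0 (b := 1) one_pos

lemma aux_zexp_int : IntegrableOn (fun z : ℝ => z * Real.exp (-z)) (Ioi 0) := by
  have h := Real.GammaIntegral_convergent (by norm_num : (0:ℝ) < 2)
  refine h.congr_fun (fun x hx => ?_) measurableSet_Ioi
  norm_num [Real.rpow_one, mul_comm]

lemma aux_zexp_integral : ∫ z in Ioi (0:ℝ), z * Real.exp (-z) = 1 := by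
  have h := Real.Gamma_eq_integral (by norm_num : (0:ℝ) < 2)
  have h1 : Real.Gamma 2 = 1 := by simpa using Real.Gamma_nat_eq_factorial 1
  rw [h1] at h
  rw [show (∫ z in Ioi (0:ℝ), z * Real.exp (-z))
      = ∫ x in Ioi (0:ℝ), Real.exp (-x) * x ^ ((2:ℝ)-1) from
    setIntegral_congr_fun measurableSet_Ioi (fun x hx => by norm_num [Real.rpow_one, mul_comm]),
    ← h]

noncomputable def gg (c ρ z : ℝ) : ℝ :=
  Real.log (1 + ρ * z) / Real.log 2 - c * Real.sqrt (1 - 1 / (1 + ρ * z) ^ 2)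

lemma measurable_gg (c ρ : ℝ) : Measurable (gg c ρ) := by
  unfold gg
  exact ((Real.measurable_log.comp (by fun_prop)).div_const _).sub
    ((measurable_const.mul (Real.continuous_sqrt.measurable.comp (by fun_prop))))

lemma gg_lower {c ρ z : ℝ} (hc : 0 < c) (hρ : 0 < ρ) (hz : 0 < z) : -c ≤ gg c ρ z := by
  unfold gg
  have h1 : (0:ℝ) ≤ Real.log (1 + ρ * z) := Real.log_nonneg (by nlinarith)
  have h2 : Real.sqrt (1 - 1 / (1 + ρ * z) ^ 2) ≤ 1 := by
    apply Real.sqrt_le_one.mpr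
    have h : (0:ℝ) ≤ 1 / (1 + ρ * z) ^ 2 := by positivity
    linarith
  have := aux_log2_pos
  have h3 : 0 ≤ Real.log (1 + ρ * z) / Real.log 2 := by positivity
  nlinarith [Real.sqrt_nonneg (1 - 1 / (1 + ρ * z) ^ 2)]

lemma gg_upper {c ρ z : ℝ} (hc : 0 < c) (hρ : 0 < ρ) (hz : 0 < z) :
    gg c ρ z ≤ (Real.log (1 + ρ) + z) / Real.log 2 := by
  unfold gg
  have h0 : Real.log (1 + ρ * z) ≤ Real.log (1 + ρ) + z := by
    have e1 : Real.log (1 + ρ * z) ≤ Real.log ((1 + ρ) * (1 + z)) := by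
      apply Real.log_le_log (by nlinarith)
      nlinarith
    rw [Real.log_mul (by nlinarith) (by nlinarith)] at e1
    have e2 : Real.log (1 + z) ≤ z := by
      have := Real.log_le_sub_one_of_pos (show (0:ℝ) < 1 + z by linarith)
      linarith
    linarith
  have := aux_log2_pos
  have h2 : 0 ≤ c * Real.sqrt (1 - 1 / (1 + ρ * z) ^ 2) := by positivity
  have h3 : Real.log (1 + ρ * z) / Real.log 2 ≤ (Real.log (1 + ρ) + z) / Real.log 2 := by
    gcongr
  linarith

-- integrability of log(1+ρz) e^{-z}
lemma aux_log_int {ρ : ℝ} (hρ : 0 < ρ) :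
    IntegrableOn (fun z : ℝ => Real.log (1 + ρ * z) * Real.exp (-z)) (Ioi 0) := by
  apply Integrable.mono'
    (g := fun z => Real.log (1 + ρ) * Real.exp (-z) + z * Real.exp (-z))
  · exact (aux_exp_int.const_mul (Real.log (1 + ρ))).add aux_zexp_int
  · exact ((Real.measurable_log.comp (by fun_prop)).mul (by fun_prop)).aestronglyMeasurable
  · filter_upwards [ae_restrict_mem measurableSet_Ioi] with z hz
    have hz : (0:ℝ) < z := hz
    have h1 : (0:ℝ) ≤ Real.log (1 + ρ * z) := Real.log_nonneg (by nlinarith)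
    have h0 : Real.log (1 + ρ * z) ≤ Real.log (1 + ρ) + z := by
      have e1 : Real.log (1 + ρ * z) ≤ Real.log ((1 + ρ) * (1 + z)) := by
        apply Real.log_le_log (by nlinarith); nlinarith
      rw [Real.log_mul (by nlinarith) (by nlinarith)] at e1
      have e2 : Real.log (1 + z) ≤ z := by
        have := Real.log_le_sub_one_of_pos (show (0:ℝ) < 1 + z by linarith)
        linarith
      linarith
    rw [Real.norm_eq_abs, abs_mul, abs_of_nonneg h1, abs_of_nonneg (Real.exp_pos _).le]
    nlinarith [Real.exp_pos (-z)]

lemma aux_gg_int {c ρ : ℝ} (hc : 0 < c) (hρ : 0 < ρ) :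
    IntegrableOn (fun z : ℝ => gg c ρ z * Real.exp (-z)) (Ioi 0) := by
  apply Integrable.mono'
    (g := fun z => c * Real.exp (-z) + ((Real.log (1 + ρ) / Real.log 2) * Real.exp (-z)
      + (Real.log 2)⁻¹ * (z * Real.exp (-z))))
  · exact (aux_exp_int.const_mul _).add ((aux_exp_int.const_mul _).add
      (aux_zexp_int.const_mul (Real.log 2)⁻¹))
  · exact ((measurable_gg c ρ).mul (by fun_prop)).aestronglyMeasurable
  · filter_upwards [ae_restrict_mem measurableSet_Ioi] with z hz
    have hz : (0:ℝ) < z := hz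
    have hl := gg_lower hc hρ hz
    have hu := gg_upper hc hρ hz
    have hL : (0:ℝ) ≤ Real.log (1 + ρ) := Real.log_nonneg (by linarith)
    have hlog2 := aux_log2_pos
    rw [Real.norm_eq_abs, abs_mul, abs_of_nonneg (Real.exp_pos _).le]
    have habs : |gg c ρ z| ≤ c + (Real.log (1 + ρ) + z) / Real.log 2 := by
      rw [abs_le]
      constructor
      · have : (0:ℝ) ≤ (Real.log (1 + ρ) + z) / Real.log 2 := by positivity
        linarith
      · have : (0:ℝ) ≤ c := hc.le
        linarith
    have hkey : (c + (Real.log (1 + ρ) + z) / Real.log 2) * Real.exp (-z)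
        = c * Real.exp (-z) + ((Real.log (1 + ρ) / Real.log 2) * Real.exp (-z)
          + (Real.log 2)⁻¹ * (z * Real.exp (-z))) := by
      field_simp
    rw [← hkey]
    exact mul_le_mul_of_nonneg_right habs (Real.exp_pos _).le

lemma aux_exp_int1 : IntegrableOn (fun z : ℝ => Real.exp (-z)) (Ioi 1) := by
  simpa using exp_neg_integrableOn_Ioi 1 (b := 1) one_pos

lemma E_upper {c ρ : ℝ} (hc : 0 < c) (hρ : 0 < ρ) :
    (∫ z in Ioi (0:ℝ), gg c ρ z * Real.exp (-z)) ≤ (Real.log (1 + ρ) + 1) / Real.log 2 := by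
  have hlog2 := aux_log2_pos
  have h1 : (∫ z in Ioi (0:ℝ), gg c ρ z * Real.exp (-z))
      ≤ ∫ z in Ioi (0:ℝ), ((Real.log (1 + ρ) / Real.log 2) * Real.exp (-z)
          + (Real.log 2)⁻¹ * (z * Real.exp (-z))) := by
    apply setIntegral_mono_on (aux_gg_int hc hρ)
      ((aux_exp_int.const_mul _).add (aux_zexp_int.const_mul _)) measurableSet_Ioi
    intro z hz
    simp only [Pi.add_apply]
    have hz : (0:ℝ) < z := hz
    have hu := gg_upper hc hρ hz
    have h2 : gg c ρ z * Real.exp (-z) ≤ ((Real.log (1 + ρ) + z) / Real.log 2) * Real.exp (-z) :=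
      mul_le_mul_of_nonneg_right hu (Real.exp_pos _).le
    have h3 : ((Real.log (1 + ρ) + z) / Real.log 2) * Real.exp (-z)
        = (Real.log (1 + ρ) / Real.log 2) * Real.exp (-z)
          + (Real.log 2)⁻¹ * (z * Real.exp (-z)) := by
      field_simp
    linarith
  rw [integral_add (aux_exp_int.const_mul _) (aux_zexp_int.const_mul _),
    integral_const_mul, integral_const_mul, integral_exp_neg_Ioi_zero, aux_zexp_integral] at h1
  calc (∫ z in Ioi (0:ℝ), gg c ρ z * Real.exp (-z))
      ≤ Real.log (1 + ρ) / Real.log 2 * 1 + (Real.log 2)⁻¹ * 1 := h1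
    _ = (Real.log (1 + ρ) + 1) / Real.log 2 := by field_simp

lemma E_lower {c ρ : ℝ} (hc : 0 < c) (hρ : 0 < ρ) :
    (Real.exp (-1) * Real.log (1 + ρ)) / Real.log 2 - c
      ≤ ∫ z in Ioi (0:ℝ), gg c ρ z * Real.exp (-z) := by
  have hlog2 := aux_log2_pos
  -- Step 1: pointwise lower bound
  have h1 : (∫ z in Ioi (0:ℝ), ((Real.log 2)⁻¹ * (Real.log (1 + ρ * z) * Real.exp (-z))
        + (-c) * Real.exp (-z)))
      ≤ ∫ z in Ioi (0:ℝ), gg c ρ z * Real.exp (-z) := by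
    apply setIntegral_mono_on
      (((aux_log_int hρ).const_mul _).add (aux_exp_int.const_mul _))
      (aux_gg_int hc hρ) measurableSet_Ioi
    intro z hz
    simp only [Pi.add_apply]
    have hz : (0:ℝ) < z := hz
    have hl := gg_lower hc hρ hz
    have hsq : Real.sqrt (1 - 1 / (1 + ρ * z) ^ 2) ≤ 1 := by
      apply Real.sqrt_le_one.mpr
      have h : (0:ℝ) ≤ 1 / (1 + ρ * z) ^ 2 := by positivity
      linarith
    have hgl : Real.log (1 + ρ * z) / Real.log 2 - c ≤ gg c ρ z := by
      unfold gg
      nlinarith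
    have h2 : (Real.log (1 + ρ * z) / Real.log 2 - c) * Real.exp (-z) ≤ gg c ρ z * Real.exp (-z) :=
      mul_le_mul_of_nonneg_right hgl (Real.exp_pos _).le
    have h3 : (Real.log (1 + ρ * z) / Real.log 2 - c) * Real.exp (-z)
        = (Real.log 2)⁻¹ * (Real.log (1 + ρ * z) * Real.exp (-z)) + (-c) * Real.exp (-z) := by
      field_simp; ring
    linarith
  rw [integral_add ((aux_log_int hρ).const_mul _) (aux_exp_int.const_mul _),
    integral_const_mul, integral_const_mul, integral_exp_neg_Ioi_zero] at h1
  -- Step 2: lower bound the log integral by restricting to Ioi 1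
  have h4 : Real.log (1 + ρ) * Real.exp (-1)
      ≤ ∫ z in Ioi (0:ℝ), Real.log (1 + ρ * z) * Real.exp (-z) := by
    have h5 : (∫ z in Ioi (1:ℝ), Real.log (1 + ρ * z) * Real.exp (-z))
        ≤ ∫ z in Ioi (0:ℝ), Real.log (1 + ρ * z) * Real.exp (-z) := by
      apply setIntegral_mono_set (aux_log_int hρ)
      · filter_upwards [ae_restrict_mem measurableSet_Ioi] with z hz
        have hz : (0:ℝ) < z := hz
        have : (0:ℝ) ≤ Real.log (1 + ρ * z) := Real.log_nonneg (by nlinarith)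
        positivity
      · exact HasSubset.Subset.eventuallyLE (fun x hx => show (0:ℝ) < x from lt_trans one_pos hx)
    have h6 : Real.log (1 + ρ) * Real.exp (-1)
        ≤ ∫ z in Ioi (1:ℝ), Real.log (1 + ρ * z) * Real.exp (-z) := by
      have h7 : (∫ z in Ioi (1:ℝ), Real.log (1 + ρ) * Real.exp (-z))
          ≤ ∫ z in Ioi (1:ℝ), Real.log (1 + ρ * z) * Real.exp (-z) := by
        apply setIntegral_mono_on (aux_exp_int1.const_mul _)
          ((aux_log_int hρ).mono_set (fun x hx => show (0:ℝ) < x from lt_trans one_pos hx)) measurableSet_Ioi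
        intro z hz
        have hz : (1:ℝ) < z := hz
        have : Real.log (1 + ρ) ≤ Real.log (1 + ρ * z) := by
          apply Real.log_le_log (by linarith)
          nlinarith
        exact mul_le_mul_of_nonneg_right this (Real.exp_pos _).le
      rw [integral_const_mul, integral_exp_neg_Ioi] at h7
      exact h7
    linarith
  have h8 : (Real.log 2)⁻¹ * (Real.log (1 + ρ) * Real.exp (-1))
      ≤ (Real.log 2)⁻¹ * ∫ z in Ioi (0:ℝ), Real.log (1 + ρ * z) * Real.exp (-z) := by
    apply mul_le_mul_of_nonneg_left h4 (by positivity)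
  have h9 : (Real.exp (-1) * Real.log (1 + ρ)) / Real.log 2
      = (Real.log 2)⁻¹ * (Real.log (1 + ρ) * Real.exp (-1)) := by field_simp
  linarith

lemma aux_I_int {n θ c ρ ε : ℝ} (hn : 0 < n) (hθ : 0 < θ) (hc : 0 < c) (hρ : 0 < ρ)
    (hε0 : 0 < ε) (hε1 : ε < 1) :
    IntegrableOn (fun z => (ε + (1 - ε) * Real.exp (-(n * θ * gg c ρ z))) * Real.exp (-z))
      (Ioi 0) := by
  apply Integrable.mono' (g := fun z => (ε + (1 - ε) * Real.exp (n * θ * c)) * Real.exp (-z))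
  · exact aux_exp_int.const_mul _
  · exact ((measurable_const.add (measurable_const.mul
      (Real.measurable_exp.comp ((measurable_gg c ρ).const_mul (n * θ)).neg))).mul
      (by fun_prop)).aestronglyMeasurable
  · filter_upwards [ae_restrict_mem measurableSet_Ioi] with z hz
    have hz : (0:ℝ) < z := hz
    have hl := gg_lower hc hρ hz
    have he : Real.exp (-(n * θ * gg c ρ z)) ≤ Real.exp (n * θ * c) := by
      apply Real.exp_le_exp.mpr
      nlinarith [mul_le_mul_of_nonneg_left hl (show (0:ℝ) ≤ n * θ by positivity)]
    have h1 : (0:ℝ) ≤ ε + (1 - ε) * Real.exp (-(n * θ * gg c ρ z)) := by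
      have h2 : (0:ℝ) < 1 - ε := by linarith
      have h3 := (Real.exp_pos (-(n * θ * gg c ρ z))).le
      nlinarith
    rw [Real.norm_eq_abs, abs_mul, abs_of_nonneg h1, abs_of_nonneg (Real.exp_pos _).le]
    apply mul_le_mul_of_nonneg_right _ (Real.exp_pos _).le
    nlinarith

lemma I_bounds {n θ c ρ ε : ℝ} (hn : 0 < n) (hθ : 0 < θ) (hc : 0 < c) (hρ : 0 < ρ)
    (hε0 : 0 < ε) (hε1 : ε < 1) :
    ε ≤ (∫ z in Ioi (0:ℝ), (ε + (1 - ε) * Real.exp (-(n * θ * gg c ρ z))) * Real.exp (-z)) ∧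
    (∫ z in Ioi (0:ℝ), (ε + (1 - ε) * Real.exp (-(n * θ * gg c ρ z))) * Real.exp (-z))
      ≤ ε + (1 - ε) * Real.exp (n * θ * c) := by
  constructor
  · have h := setIntegral_mono_on (aux_exp_int.const_mul ε)
      (aux_I_int hn hθ hc hρ hε0 hε1) measurableSet_Ioi (fun z hz => by
        have hz : (0:ℝ) < z := hz
        have h2 : (0:ℝ) < 1 - ε := by linarith
        have h3 := (Real.exp_pos (-(n * θ * gg c ρ z))).le
        nlinarith [mul_nonneg (mul_nonneg h2.le h3) (Real.exp_pos (-z)).le])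
    rwa [integral_const_mul, integral_exp_neg_Ioi_zero, mul_one] at h
  · have h := setIntegral_mono_on (aux_I_int hn hθ hc hρ hε0 hε1)
      (aux_exp_int.const_mul (ε + (1 - ε) * Real.exp (n * θ * c))) measurableSet_Ioi
      (fun z hz => by
        have hz : (0:ℝ) < z := hz
        have hl := gg_lower hc hρ hz
        have he : Real.exp (-(n * θ * gg c ρ z)) ≤ Real.exp (n * θ * c) := by
          apply Real.exp_le_exp.mpr
          nlinarith [mul_le_mul_of_nonneg_left hl (show (0:ℝ) ≤ n * θ by positivity)]
        nlinarith [mul_le_mul_of_nonneg_right (mul_le_mul_of_nonneg_left he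
          (show (0:ℝ) ≤ 1 - ε by linarith)) (Real.exp_pos (-z)).le])
    rwa [integral_const_mul, integral_exp_neg_Ioi_zero, mul_one] at h

lemma aux_div_log_atTop : Tendsto (fun ρ : ℝ => ρ / (Real.log (1 + ρ) + 1)) atTop atTop := by
  have h1 : (fun ρ : ℝ => Real.log (1 + ρ)) =o[atTop] (fun ρ : ℝ => 1 + ρ) :=
    Real.isLittleO_log_id_atTop.comp_tendsto (tendsto_atTop_add_const_left atTop 1 tendsto_id)
  have h2 : (fun ρ : ℝ => (1:ℝ) + ρ) =O[atTop] (fun ρ : ℝ => ρ) := by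
    rw [Asymptotics.isBigO_iff]
    refine ⟨2, ?_⟩
    filter_upwards [eventually_ge_atTop (1:ℝ)] with ρ hρ
    rw [Real.norm_eq_abs, Real.norm_eq_abs, abs_of_nonneg (by linarith), abs_of_nonneg (by linarith)]
    linarith
  have h3 := h1.trans_isBigO h2
  have h4 : (fun _ : ℝ => (1:ℝ)) =o[atTop] (fun ρ : ℝ => ρ) := Asymptotics.isLittleO_const_id_atTop 1
  have h5 : (fun ρ : ℝ => Real.log (1 + ρ) + 1) =o[atTop] (fun ρ : ℝ => ρ) := h3.add h4
  have h6 : Tendsto (fun ρ : ℝ => (Real.log (1 + ρ) + 1) / ρ) atTop (nhds 0) :=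
    h5.tendsto_div_nhds_zero
  have h7 : Tendsto (fun ρ : ℝ => (Real.log (1 + ρ) + 1) / ρ) atTop (nhdsWithin 0 (Ioi 0)) := by
    apply tendsto_nhdsWithin_of_tendsto_nhds_of_eventually_within _ h6
    filter_upwards [eventually_gt_atTop (0:ℝ)] with ρ hρ
    have : (0:ℝ) ≤ Real.log (1 + ρ) := Real.log_nonneg (by linarith)
    have : (0:ℝ) < (Real.log (1 + ρ) + 1) / ρ := by positivity
    exact this
  have h8 := h7.inv_tendsto_nhdsGT_zero
  apply h8.congr'
  filter_upwards [eventually_gt_atTop (0:ℝ)] with ρ hρ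
  simp only [Pi.inv_apply]
  rw [inv_div]

/-- The effective energy efficiency with empty-buffer probability tends to 0
as the SNR ρ tends to infinity. -/
theorem eee_ebp_tendsto_zero_at_top
    (n θ lam ζ Pc c ε : ℝ)
    (hn : 0 < n) (hθ : 0 < θ) (hlam : 0 < lam) (hζ : 0 < ζ) (hPc : 0 < Pc)
    (hc : 0 < c) (hε : ε ∈ Set.Ioo (0:ℝ) 1)
    (r : ℝ → ℝ → ℝ)
    (hr : ∀ ρ ∈ Set.Ioi (0:ℝ), ∀ z ∈ Set.Ioi (0:ℝ),
      r ρ z = Real.log (1 + ρ * z) / Real.log 2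
        - c * Real.sqrt (1 - 1 / (1 + ρ * z) ^ 2))
    (E : ℝ → ℝ)
    (hE : ∀ ρ ∈ Set.Ioi (0:ℝ), E ρ = ∫ z in Set.Ioi (0:ℝ), r ρ z * Real.exp (-z))
    (η : ℝ → ℝ)
    (hη : ∀ ρ ∈ Set.Ioi (0:ℝ), η ρ =
      (-(1 / (n * θ)) * Real.log (∫ z in Set.Ioi (0:ℝ),
          (ε + (1 - ε) * Real.exp (-(n * θ * r ρ z))) * Real.exp (-z)))
        / (lam * ζ * ρ / E ρ + Pc)) :
    Tendsto η atTop (nhds 0) := by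
  obtain ⟨hε0, hε1⟩ := hε
  have hlog2 := aux_log2_pos
  have hnθ : (0:ℝ) < n * θ := by positivity
  have hKpos : (0:ℝ) < ε + (1 - ε) * Real.exp (n * θ * c) := by
    have h2 : (0:ℝ) < 1 - ε := by linarith
    have h3 := Real.exp_pos (n * θ * c)
    nlinarith
  -- abbreviation for the bound on the numerator
  have hEg : ∀ ρ : ℝ, 0 < ρ → E ρ = ∫ z in Ioi (0:ℝ), gg c ρ z * Real.exp (-z) := by
    intro ρ hρ
    rw [hE ρ hρ]
    apply setIntegral_congr_fun measurableSet_Ioi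
    intro z hz
    dsimp only
    rw [hr ρ hρ z hz]
    rfl
  have hIg : ∀ ρ : ℝ, 0 < ρ →
      (∫ z in Ioi (0:ℝ), (ε + (1 - ε) * Real.exp (-(n * θ * r ρ z))) * Real.exp (-z))
        = ∫ z in Ioi (0:ℝ), (ε + (1 - ε) * Real.exp (-(n * θ * gg c ρ z))) * Real.exp (-z) := by
    intro ρ hρ
    apply setIntegral_congr_fun measurableSet_Ioi
    intro z hz
    dsimp only
    rw [hr ρ hρ z hz]
    rfl
  -- the numerator is uniformly bounded by M
  have hNbound : ∀ ρ : ℝ, 0 < ρ →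
      |(-(1 / (n * θ)) * Real.log (∫ z in Ioi (0:ℝ),
          (ε + (1 - ε) * Real.exp (-(n * θ * r ρ z))) * Real.exp (-z)))|
        ≤ (1 / (n * θ)) * (|Real.log ε| + |Real.log (ε + (1 - ε) * Real.exp (n * θ * c))|) := by
    intro ρ hρ
    rw [hIg ρ hρ]
    obtain ⟨hIl, hIu⟩ := I_bounds hn hθ hc hρ hε0 hε1
    have hIpos : (0:ℝ) <
        ∫ z in Ioi (0:ℝ), (ε + (1 - ε) * Real.exp (-(n * θ * gg c ρ z))) * Real.exp (-z) :=
      lt_of_lt_of_le hε0 hIl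
    have hlogl := Real.log_le_log hε0 hIl
    have hlogu := Real.log_le_log hIpos hIu
    have habs : |Real.log (∫ z in Ioi (0:ℝ),
        (ε + (1 - ε) * Real.exp (-(n * θ * gg c ρ z))) * Real.exp (-z))|
        ≤ |Real.log ε| + |Real.log (ε + (1 - ε) * Real.exp (n * θ * c))| := by
      rw [abs_le]
      constructor
      · have h1 := neg_abs_le (Real.log ε)
        have h2 := abs_nonneg (Real.log (ε + (1 - ε) * Real.exp (n * θ * c)))
        linarith
      · have h1 := le_abs_self (Real.log (ε + (1 - ε) * Real.exp (n * θ * c)))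
        have h2 := abs_nonneg (Real.log ε)
        linarith
    rw [abs_mul, abs_neg, abs_of_pos (show (0:ℝ) < 1 / (n * θ) by positivity)]
    exact mul_le_mul_of_nonneg_left habs (by positivity)
  -- E is eventually positive
  have hEev : ∀ᶠ ρ in atTop, 0 < E ρ := by
    have htend : Tendsto (fun ρ : ℝ => (Real.exp (-1) * Real.log (1 + ρ)) / Real.log 2 - c)
        atTop atTop := by
      apply tendsto_atTop_add_const_right
      apply Tendsto.atTop_div_const hlog2
      apply Tendsto.const_mul_atTop (Real.exp_pos (-1))
      exact Real.tendsto_log_atTop.comp (tendsto_atTop_add_const_left atTop 1 tendsto_id)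
    filter_upwards [htend.eventually_gt_atTop 0, eventually_gt_atTop (0:ℝ)] with ρ h1 hρ
    have h2 := E_lower (c := c) (ρ := ρ) hc hρ
    rw [hEg ρ hρ]
    linarith
  -- the denominator tends to infinity
  have hDlow : Tendsto (fun ρ : ℝ => lam * ζ * Real.log 2 * (ρ / (Real.log (1 + ρ) + 1)) + Pc)
      atTop atTop :=
    tendsto_atTop_add_const_right _ Pc (aux_div_log_atTop.const_mul_atTop (by positivity))
  have hD : Tendsto (fun ρ : ℝ => lam * ζ * ρ / E ρ + Pc) atTop atTop := by
    apply tendsto_atTop_mono' atTop _ hDlow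
    filter_upwards [hEev, eventually_gt_atTop (0:ℝ)] with ρ hEpos hρ
    have hub := E_upper (c := c) (ρ := ρ) hc hρ
    rw [← hEg ρ hρ] at hub
    have hL : (0:ℝ) < Real.log (1 + ρ) + 1 := by
      have := Real.log_nonneg (show (1:ℝ) ≤ 1 + ρ by linarith)
      linarith
    have h1 : lam * ζ * Real.log 2 * (ρ / (Real.log (1 + ρ) + 1))
        = lam * ζ * ρ / ((Real.log (1 + ρ) + 1) / Real.log 2) := by
      field_simp
    have h2 : lam * ζ * ρ / ((Real.log (1 + ρ) + 1) / Real.log 2) ≤ lam * ζ * ρ / E ρ := by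
      gcongr
    linarith
  -- squeeze
  apply squeeze_zero_norm'
    (a := fun ρ : ℝ =>
      ((1 / (n * θ)) * (|Real.log ε| + |Real.log (ε + (1 - ε) * Real.exp (n * θ * c))|))
        / (lam * ζ * ρ / E ρ + Pc))
  · filter_upwards [hEev, eventually_gt_atTop (0:ℝ)] with ρ hEpos hρ
    have hDpos : (0:ℝ) < lam * ζ * ρ / E ρ + Pc := by
      have : (0:ℝ) < lam * ζ * ρ / E ρ := by positivity
      linarith
    rw [hη ρ hρ, Real.norm_eq_abs, abs_div, abs_of_pos hDpos]
    gcongr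
    exact hNbound ρ hρ
  · exact tendsto_const_nhds.div_atTop hD
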